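/- Let {ψ_n}_{n≥0} be the Gram–Schmidt orthonormalization of {s^n e^s}_{n≥0} in L²(-R,R), and define a_{mk} = ∫_{-R}^{R} ψ_k'(s) ψ_m(s) ds. Then a_{mm} = 1 for all m, and a_{mk} = 0 whenever k < m. -/

import Mathlib

open MeasureTheory Polynomial in
private lemma integrableOn_poly_exp (R : ℝ) (p q : Polynomial ℝ) :
    IntegrableOn (fun s => p.eval s * Real.exp s * (q.eval s * Real.exp s))
      (Set.Ioo (-R) R) := by
  have hc : Continuous fun s : ℝ => p.eval s * Real.exp s * (q.eval s * Real.exp s) :=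
    ((p.continuous).mul Real.continuous_exp).mul ((q.continuous).mul Real.continuous_exp)
  exact (hc.integrableOn_Icc (a := -R) (b := R)).mono_set Set.Ioo_subset_Icc_self

open MeasureTheory Polynomial in
private lemma ortho_zero (R : ℝ) (ψ : ℕ → ℝ → ℝ) (P : ℕ → Polynomial ℝ)
    (hψ : ∀ n, ψ n = fun s => (P n).eval s * Real.exp s)
    (hdeg : ∀ n, (P n).degree = (n : ℕ))
    (horth : ∀ m k, (∫ s in Set.Ioo (-R) R, ψ m s * ψ k s) = if m = k then 1 else 0)
    (m : ℕ) :
    ∀ n (Q : Polynomial ℝ), Q.natDegree ≤ n → Q.degree < (m : ℕ) →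
      (∫ s in Set.Ioo (-R) R, Q.eval s * Real.exp s * ψ m s) = 0 := by
  intro n
  induction n using Nat.strong_induction_on with
  | _ n ih =>
    intro Q hQn hQm
    by_cases hQ0 : Q = 0
    · simp [hQ0]
    · set d := Q.natDegree with hd
      have hQdeg : Q.degree = (d : ℕ) := Polynomial.degree_eq_natDegree hQ0
      have hdm : d < m := by
        rw [hQdeg] at hQm; exact_mod_cast hQm
      have hPd0 : P d ≠ 0 := fun h => by
        have := hdeg d; rw [h] at this; simp at this
      have hlc : (P d).leadingCoeff ≠ 0 := Polynomial.leadingCoeff_ne_zero.mpr hPd0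
      set c := Q.leadingCoeff / (P d).leadingCoeff with hc
      have hc0 : c ≠ 0 := div_ne_zero (Polynomial.leadingCoeff_ne_zero.mpr hQ0) hlc
      set Q' := Q - Polynomial.C c * P d with hQ'
      have hdegC : Q.degree = (Polynomial.C c * P d).degree := by
        rw [Polynomial.degree_C_mul hc0, hdeg d, hQdeg]
      have hlcC : Q.leadingCoeff = (Polynomial.C c * P d).leadingCoeff := by
        rw [Polynomial.leadingCoeff_mul, Polynomial.leadingCoeff_C]
        rw [hc, div_mul_cancel₀ _ hlc]
      have hQ'deg : Q'.degree < Q.degree :=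
        Polynomial.degree_sub_lt hdegC hQ0 hlcC
      have hQ'm : Q'.degree < (m : ℕ) := lt_trans hQ'deg hQm
      -- split the integral
      simp only [hψ m]
      have hfun : (fun s => Q.eval s * Real.exp s * ((P m).eval s * Real.exp s))
          = fun s => c * ((P d).eval s * Real.exp s * ((P m).eval s * Real.exp s))
              + Q'.eval s * Real.exp s * ((P m).eval s * Real.exp s) := by
        funext s
        have hQe : Q.eval s = c * (P d).eval s + Q'.eval s := by
          simp only [hQ', Polynomial.eval_sub, Polynomial.eval_mul, Polynomial.eval_C]
          ring
        rw [hQe]; ring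
      rw [hfun, integral_add ((integrableOn_poly_exp R (P d) (P m)).const_mul c)
        (integrableOn_poly_exp R Q' (P m)), integral_const_mul c _]
      have h1 : (∫ s in Set.Ioo (-R) R,
          (P d).eval s * Real.exp s * ((P m).eval s * Real.exp s)) = 0 := by
        have heq : (fun s => (P d).eval s * Real.exp s * ((P m).eval s * Real.exp s))
            = fun s => ψ m s * ψ d s := by
          funext s; simp only [hψ]; ring
        rw [heq, horth m d, if_neg (Nat.ne_of_gt hdm)]
      have h2 : (∫ s in Set.Ioo (-R) R,
          Q'.eval s * Real.exp s * ((P m).eval s * Real.exp s)) = 0 := by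
        by_cases hQ'0 : Q' = 0
        · simp [hQ'0]
        · have hn' : Q'.natDegree < n :=
            lt_of_lt_of_le (Polynomial.natDegree_lt_natDegree hQ'0 hQ'deg) hQn
          have := ih Q'.natDegree hn' Q' le_rfl hQ'm
          simpa [hψ m] using this
      rw [h1, h2]; ring

/-- For the Gram–Schmidt system ψ_n(s) = P_n(s)e^s (deg P_n = n, orthonormal in
L²(-R,R)), the numbers a_{mk} = ∫ ψ_k' ψ_m satisfy a_{mm} = 1 and a_{mk} = 0 for
k < m. -/
theorem gramSchmidt_derivative_matrix_entries
    (R : ℝ) (hR : 0 < R)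
    (ψ : ℕ → ℝ → ℝ) (P : ℕ → Polynomial ℝ)
    (hform : ∀ n s, ψ n s = (P n).eval s * Real.exp s)
    (hdeg : ∀ n, (P n).degree = (n : ℕ))
    (horth : ∀ m k, (∫ s in Set.Ioo (-R) R, ψ m s * ψ k s) =
      if m = k then 1 else 0)
    (a : ℕ → ℕ → ℝ)
    (ha : ∀ m k, a m k = ∫ s in Set.Ioo (-R) R, deriv (ψ k) s * ψ m s) :
    (∀ m, a m m = 1) ∧ (∀ m k, k < m → a m k = 0) := by
  have hψ : ∀ n, ψ n = fun s => (P n).eval s * Real.exp s := fun n => funext (hform n)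
  have hP0 : ∀ k, P k ≠ 0 := fun k h => by
    have := hdeg k; rw [h] at this; simp at this
  have hderiv : ∀ k s, deriv (ψ k) s
      = (P k).derivative.eval s * Real.exp s + (P k).eval s * Real.exp s := by
    intro k s
    rw [hψ k]
    exact (((P k).hasDerivAt s).mul (Real.hasDerivAt_exp s)).deriv
  -- the key computation for k ≤ m
  have key : ∀ m k, k ≤ m → a m k = if m = k then 1 else 0 := by
    intro m k hkm
    rw [ha m k]
    have hfun : (fun s => deriv (ψ k) s * ψ m s)
        = fun s => (P k).derivative.eval s * Real.exp s * ((P m).eval s * Real.exp s)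
            + (P k).eval s * Real.exp s * ((P m).eval s * Real.exp s) := by
      funext s; rw [hderiv k s, hψ m]; ring
    rw [hfun, MeasureTheory.integral_add (integrableOn_poly_exp R (P k).derivative (P m))
      (integrableOn_poly_exp R (P k) (P m))]
    have hdlt : ((P k).derivative).degree < (m : ℕ) := by
      have h1 : ((P k).derivative).degree < (P k).degree :=
        Polynomial.degree_derivative_lt (hP0 k)
      have h2 : ((k : ℕ) : WithBot ℕ) ≤ ((m : ℕ) : WithBot ℕ) := by exact_mod_cast hkm
      exact lt_of_lt_of_le (hdeg k ▸ h1) h2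
    have h1 : (∫ s in Set.Ioo (-R) R,
        (P k).derivative.eval s * Real.exp s * ((P m).eval s * Real.exp s)) = 0 := by
      have := ortho_zero R ψ P hψ hdeg horth m ((P k).derivative).natDegree
        (P k).derivative le_rfl hdlt
      simpa [hψ m] using this
    have h2 : (∫ s in Set.Ioo (-R) R,
        (P k).eval s * Real.exp s * ((P m).eval s * Real.exp s))
        = if m = k then 1 else 0 := by
      have heq : (fun s => (P k).eval s * Real.exp s * ((P m).eval s * Real.exp s))
          = fun s => ψ m s * ψ k s := by
        funext s; simp only [hψ]; ring
      rw [heq, horth m k]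
    rw [h1, h2, zero_add]
  constructor
  · intro m; rw [key m m le_rfl, if_pos rfl]
  · intro m k hkm; rw [key m k (le_of_lt hkm), if_neg (Nat.ne_of_gt hkm)]
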